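/- Let G be an AH-algebra. For each g ∈ G there is a uniquely determined projection g° ∈ P such that, for all h ∈ G, gh = 0 if and only if g°h = 0. Moreover, g° ∈ P ∩ CC(g). -/

import Mathlib

/-- An e-ring `(R,E)`: an associative ring `R` with unity together with a set `E ⊆ R`
of effects, satisfying the Foulis axioms.  `E⁺` is realized as the additive submonoid
closure of `E` (the set of all finite sums of effects). -/
structure ERing (R : Type*) [Ring R] where
  E : Set R
  zero_mem : (0 : R) ∈ E
  one_mem : (1 : R) ∈ E
  compl_mem : ∀ e ∈ E, 1 - e ∈ E
  epos_i : ∀ a ∈ AddSubmonoid.closure E, -a ∈ AddSubmonoid.closure E → a = 0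
  epos_ii : ∀ a ∈ AddSubmonoid.closure E, 1 - a ∈ AddSubmonoid.closure E → a ∈ E
  epos_iii : ∀ a ∈ AddSubmonoid.closure E, ∀ b ∈ AddSubmonoid.closure E,
    a * b = b * a → a * b ∈ AddSubmonoid.closure E
  epos_iv : ∀ a ∈ AddSubmonoid.closure E, ∀ b ∈ AddSubmonoid.closure E,
    a * b * a ∈ AddSubmonoid.closure E
  epos_v : ∀ a ∈ AddSubmonoid.closure E, ∀ b ∈ AddSubmonoid.closure E,
    a * b * a = 0 → a * b = 0 ∧ b * a = 0
  epos_vi : ∀ a ∈ AddSubmonoid.closure E, ∀ b ∈ AddSubmonoid.closure E,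
    (a - b) ^ 2 ∈ AddSubmonoid.closure E
  zero_ne_one : (0 : R) ≠ 1

namespace ERing

variable {R : Type*} [Ring R] (er : ERing R)

/-- `E⁺`, the set of all finite sums of effects; the positive cone of the directed group. -/
def Epos : Set R := (AddSubmonoid.closure er.E : Set R)

/-- The directed group `G = E⁺ - E⁺` of the e-ring. -/
def G : Set R := {g | ∃ a ∈ er.Epos, ∃ b ∈ er.Epos, g = a - b}

/-- The partial order on the directed group: `g ≤ h` iff `h - g ∈ E⁺`. -/
def le (g h : R) : Prop := h - g ∈ er.Epos

/-- The set of projections `P = {p ∈ G : p = p²}`. -/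
def P : Set R := {p | p ∈ er.G ∧ p = p ^ 2}

/-- The commutant in `G` of a subset `A ⊆ G`. -/
def commutant (A : Set R) : Set R := {g | g ∈ er.G ∧ ∀ a ∈ A, g * a = a * g}

/-- The bicommutant in `G` of a subset `A ⊆ G`. -/
def CC (A : Set R) : Set R := er.commutant (er.commutant A)

/-- `s` is the supremum of `A` within the subset `S` (w.r.t. the e-ring order). -/
def IsSupIn (S A : Set R) (s : R) : Prop :=
  s ∈ S ∧ (∀ a ∈ A, er.le a s) ∧ ∀ b ∈ S, (∀ a ∈ A, er.le a b) → er.le s b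

/-- `s` is the infimum of `A` within the subset `S` (w.r.t. the e-ring order). -/
def IsInfIn (S A : Set R) (s : R) : Prop :=
  s ∈ S ∧ (∀ a ∈ A, er.le s a) ∧ ∀ b ∈ S, (∀ a ∈ A, er.le b a) → er.le b s

/-- Quadratic annihilation property. -/
def HasQA : Prop := ∀ g ∈ er.G, ∀ h ∈ er.G, g * h ^ 2 * g = 0 → g * h = 0 ∧ h * g = 0

/-- Commutative Vigier property: every ascending sequence of pairwise commuting elements
of `G` bounded above in `G` has a supremum in `G` which double commutes with the sequence. -/
def HasCV : Prop :=
  ∀ g : ℕ → R, (∀ n, g n ∈ er.G) → (∀ n, er.le (g n) (g (n + 1))) →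
    (∀ m n, g m * g n = g n * g m) → (∃ b ∈ er.G, ∀ n, er.le (g n) b) →
    ∃ s, er.IsSupIn er.G (Set.range g) s ∧ s ∈ er.CC (Set.range g)

/-- `G` is an abstract Hermitian (AH) algebra: there is a semitransparent effect `½`,
`G` has quadratic annihilation, and `G` has the commutative Vigier property. -/
def IsAH : Prop := (∃ h ∈ er.E, h + h = 1) ∧ er.HasQA ∧ er.HasCV

end ERing

namespace ERingAux
open ERing
variable {R : Type*} [Ring R] {er : ERing R}

lemma epos_zero : (0:R) ∈ er.Epos := (AddSubmonoid.closure er.E).zero_mem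
lemma epos_of_E {a : R} (h : a ∈ er.E) : a ∈ er.Epos := AddSubmonoid.subset_closure h
lemma epos_one : (1:R) ∈ er.Epos := epos_of_E er.one_mem
lemma epos_add {a b : R} (ha : a ∈ er.Epos) (hb : b ∈ er.Epos) : a + b ∈ er.Epos :=
  (AddSubmonoid.closure er.E).add_mem ha hb
lemma epos_nsmul {a : R} (ha : a ∈ er.Epos) (n : ℕ) : n • a ∈ er.Epos :=
  (AddSubmonoid.closure er.E).nsmul_mem ha n
lemma epos_natCast (n : ℕ) : ((n:R)) ∈ er.Epos := by
  simpa [nsmul_eq_mul] using epos_nsmul (epos_one (er := er)) n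
lemma epos_mul {a b : R} (ha : a ∈ er.Epos) (hb : b ∈ er.Epos) (h : a * b = b * a) :
    a * b ∈ er.Epos := er.epos_iii a ha b hb h
lemma epos_conj {a b : R} (ha : a ∈ er.Epos) (hb : b ∈ er.Epos) : a * b * a ∈ er.Epos :=
  er.epos_iv a ha b hb
lemma epos_sq {a b : R} (ha : a ∈ er.Epos) (hb : b ∈ er.Epos) : (a - b) ^ 2 ∈ er.Epos :=
  er.epos_vi a ha b hb
lemma epos_antisym {a : R} (ha : a ∈ er.Epos) (hb : -a ∈ er.Epos) : a = 0 :=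
  er.epos_i a ha hb
lemma epos_pow {a : R} (ha : a ∈ er.Epos) : ∀ n : ℕ, a ^ n ∈ er.Epos
  | 0 => by simpa using epos_one (er := er)
  | (n+1) => by
      rw [pow_succ]
      exact epos_mul (epos_pow ha n) ha ((Commute.refl a).pow_left n).eq
lemma epos_bound {a : R} (ha : a ∈ er.Epos) : ∃ N : ℕ, (N:R) - a ∈ er.Epos := by
  induction ha using AddSubmonoid.closure_induction with
  | mem x hx => exact ⟨1, by simpa using epos_of_E (er.compl_mem x hx)⟩
  | zero => exact ⟨0, by simpa using epos_zero (er := er)⟩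
  | add x y hx hy ihx ihy =>
    obtain ⟨N, hN⟩ := ihx; obtain ⟨M, hM⟩ := ihy
    refine ⟨N + M, ?_⟩
    have h : ((N+M : ℕ):R) - (x+y) = ((N:R) - x) + ((M:R) - y) := by push_cast; abel
    rw [h]; exact epos_add hN hM

lemma G_of_epos {a : R} (ha : a ∈ er.Epos) : a ∈ er.G :=
  ⟨a, ha, 0, epos_zero, (sub_zero a).symm⟩
lemma G_zero : (0:R) ∈ er.G := G_of_epos epos_zero
lemma G_one : (1:R) ∈ er.G := G_of_epos epos_one
lemma G_sub {x y : R} (hx : x ∈ er.G) (hy : y ∈ er.G) : x - y ∈ er.G := by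
  obtain ⟨a, ha, b, hb, hab⟩ := hx
  obtain ⟨c, hc, d, hd, hcd⟩ := hy
  exact ⟨a + d, epos_add ha hd, b + c, epos_add hb hc, by rw [hab, hcd]; abel⟩
lemma G_sq {x : R} (hx : x ∈ er.G) : x ^ 2 ∈ er.Epos := by
  obtain ⟨a, ha, b, hb, hab⟩ := hx
  rw [hab]; exact epos_sq ha hb

lemma ann_symm (hQA : er.HasQA) {u v : R} (hu : u ∈ er.G) (hv : v ∈ er.G)
    (huv : u * v = 0) : v * u = 0 := by
  have h0 : v * u ^ 2 * v = 0 := by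
    have : v * u ^ 2 * v = v * u * (u * v) := by rw [sq]; noncomm_ring
    rw [this, huv, mul_zero]
  exact (hQA v hv u hu h0).1

section Half
variable {hl : R} (hh : hl + hl = 1)
include hh

lemma two_tf {y : R} (h2 : y + y = 0) : y = 0 := by
  have q : (hl + hl) * y * (hl + hl) = y := by rw [hh, one_mul, mul_one]
  have e1 : (hl + hl) * y * (hl + hl) = hl*(y+y)*hl + hl*(y+y)*hl := by noncomm_ring
  rw [h2] at e1
  simp only [mul_zero, zero_mul, add_zero] at e1
  rw [e1] at q; exact q.symm

lemma half_central (x : R) : hl * x = x * hl := by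
  have h2 : (hl*x - x*hl) + (hl*x - x*hl) = 0 := by
    have : (hl*x - x*hl) + (hl*x - x*hl) = (hl+hl)*x - x*(hl+hl) := by noncomm_ring
    rw [this, hh, one_mul, mul_one, sub_self]
  exact sub_eq_zero.mp (two_tf hh h2)

lemma half_pow_central (m : ℕ) (x : R) : hl ^ m * x = x * hl ^ m :=
  ((show Commute hl x from half_central hh x).pow_left m).eq

lemma half_smul (y : R) : hl * ((2:R) * y) = y := by
  have : hl * ((2:R) * y) = (hl + hl) * y := by rw [two_mul]; noncomm_ring
  rw [this, hh, one_mul]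

lemma half_inv (k : ℕ) (y : R) : hl ^ k * ((2:R) ^ k * y) = y := by
  induction k with
  | zero => simp
  | succ n ih =>
    rw [pow_succ, pow_succ' (2:R), mul_assoc, mul_assoc]
    rw [half_smul hh]
    exact ih

lemma two_pow_half_pow (m : ℕ) : (2:R) ^ m * hl ^ m = 1 := by
  have := half_inv hh m (1:R)
  rw [mul_one] at this
  rw [← half_pow_central hh m ((2:R)^m)]
  exact this
end Half
end ERingAux

namespace ERingAux
open ERing
variable {R : Type*} [Ring R] {er : ERing R}

section Half2
variable {hl : R} (hh : hl + hl = 1) (hmem : hl ∈ er.E)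

include hh hmem in
lemma epos_div (k : ℕ) {y : R} (hy : (2:R) ^ (2*k) * y ∈ er.Epos) : y ∈ er.Epos := by
  have key : hl ^ k * ((2:R) ^ (2*k) * y) * hl ^ k = y := by
    rw [mul_assoc, ← half_pow_central hh k ((2:R) ^ (2*k) * y), ← mul_assoc, ← pow_add,
      ← two_mul]
    exact half_inv hh (2*k) y
  rw [← key]
  exact epos_conj (epos_pow (epos_of_E hmem) k) hy

include hh in
lemma two_pow_cancel (m : ℕ) {y : R} (hy : (2:R) ^ m * y = 0) : y = 0 := by
  have := half_inv hh m y
  rw [hy, mul_zero] at this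
  exact this.symm
end Half2

lemma arch (hCV : er.HasCV) {x : R} (hx : x ∈ er.Epos)
    (hb : ∀ n : ℕ, (1:R) - n • x ∈ er.Epos) : x = 0 := by
  obtain ⟨s, hsup, -⟩ := hCV (fun n => n • x)
    (fun n => G_of_epos (epos_nsmul hx n))
    (fun n => show ((n+1) • x - n • x ∈ er.Epos) by
      rw [succ_nsmul]; simpa using hx)
    (fun m n => (((Commute.refl x).smul_left m).smul_right n).eq)
    ⟨1, G_one, fun n => hb n⟩
  have hub : ∀ n : ℕ, s - (n+1) • x ∈ er.Epos := fun n => hsup.2.1 _ ⟨n+1, rfl⟩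
  have hle : er.le s (s - x) := by
    refine hsup.2.2 (s - x) (G_sub hsup.1 (G_of_epos hx)) ?_
    rintro a ⟨n, rfl⟩
    show (s - x) - n • x ∈ er.Epos
    have h := hub n
    rw [succ_nsmul] at h
    have : (s - x) - n • x = s - (n • x + x) := by abel
    rw [this]; exact h
  have : -x ∈ er.Epos := by
    have h : (s - x) - s = -x := by abel
    rw [← h]; exact hle
  exact epos_antisym hx this

end ERingAux

namespace ERingAux
open ERing
variable {R : Type*} [Ring R] {er : ERing R}

lemma carrier_effect (hQA : er.HasQA) (hCV : er.HasCV)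
    {hl : R} (hmem : hl ∈ er.E) (hh : hl + hl = 1)
    {e : R} (he : e ∈ er.Epos) (he1 : (1:R) - e ∈ er.Epos) :
    ∃ p, p ∈ er.G ∧ p = p ^ 2 ∧ (∀ x ∈ er.G, (e * x = 0 ↔ p * x = 0)) ∧
      (∀ y ∈ er.G, y * e = e * y → y * p = p * y) := by
  obtain ⟨r, hr_def⟩ : ∃ r : R, r = 1 - e := ⟨_, rfl⟩
  have cre : Commute r e := by
    show r * e = e * r
    rw [hr_def]; noncomm_ring
  have hr : r ∈ er.Epos := hr_def ▸ he1
  have hrpow : ∀ n : ℕ, r ^ n ∈ er.Epos := epos_pow hr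
  obtain ⟨f, hfn⟩ : ∃ f : ℕ → R, ∀ n, f n = 1 - r ^ n := ⟨fun n => 1 - r ^ n, fun _ => rfl⟩
  have hfe : ∀ n, f (n+1) = f n + r ^ n * e := by
    intro n
    rw [hfn, hfn, pow_succ, hr_def]; noncomm_ring
  have hrne : ∀ n : ℕ, r ^ n * e = e * r ^ n := fun n => (cre.pow_left n).eq
  have hfE : ∀ n, f n ∈ er.Epos := by
    intro n; induction n with
    | zero => rw [hfn, pow_zero, sub_self]; exact epos_zero
    | succ n ih => rw [hfe n]; exact epos_add ih (epos_mul (hrpow n) he (hrne n))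
  have crr : ∀ m n : ℕ, Commute (r ^ m) (r ^ n) := fun m n => (Commute.refl r).pow_pow m n
  have cf : ∀ m n, Commute (f m) (f n) := fun m n => by
    rw [hfn, hfn]
    exact (Commute.one_left _).sub_left (((Commute.one_right _).sub_right (crr m n)))
  have cfe : ∀ n, Commute e (f n) := fun n => by
    rw [hfn]
    exact (Commute.one_right e).sub_right ((cre.symm.pow_right n))
  have h1mf : ∀ n, (1:R) - f n = r ^ n := by
    intro n; rw [hfn, sub_sub_cancel]
  obtain ⟨p, hsup, hcc⟩ := hCV f (fun n => G_of_epos (hfE n))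
    (fun n => show f (n+1) - f n ∈ er.Epos by
      rw [hfe n]
      have : f n + r ^ n * e - f n = r ^ n * e := by abel
      rw [this]; exact epos_mul (hrpow n) he (hrne n))
    (fun m n => (cf m n).eq)
    ⟨1, G_one, fun n => show (1:R) - f n ∈ er.Epos by rw [h1mf n]; exact hrpow n⟩
  have hpG : p ∈ er.G := hsup.1
  have hub : ∀ n, p - f n ∈ er.Epos := fun n => hsup.2.1 _ ⟨n, rfl⟩
  have hp1 : (1:R) - p ∈ er.Epos := by
    refine hsup.2.2 1 G_one ?_
    rintro a ⟨n, rfl⟩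
    show (1:R) - f n ∈ er.Epos
    rw [h1mf n]; exact hrpow n
  have hpf : ∀ n, Commute p (f n) := fun n => hcc.2 (f n)
    ⟨G_of_epos (hfE n), by rintro a ⟨m, rfl⟩; exact (cf n m).eq⟩
  have hpe : Commute p e := hcc.2 e
    ⟨G_of_epos he, by rintro a ⟨m, rfl⟩; exact (cfe m).eq⟩
  have hpr : Commute p r := by
    rw [hr_def]; exact (Commute.one_right p).sub_right hpe
  have hpE : p ∈ er.Epos := by
    have h := epos_add (hub 0) (hfE 0)
    simpa using h
  obtain ⟨q, hq_def⟩ : ∃ q : R, q = 1 - p := ⟨_, rfl⟩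
  have hq : q ∈ er.Epos := hq_def ▸ hp1
  have hqe : Commute q e := by
    rw [hq_def]; exact (Commute.one_left e).sub_left hpe
  have hqrn : ∀ n, r ^ n - q ∈ er.Epos := by
    intro n
    have h : r ^ n - q = p - f n := by rw [hq_def, hfn]; abel
    rw [h]; exact hub n
  -- q * e = 0 via Archimedean property
  have hqe0 : q * e = 0 := by
    refine arch hCV (epos_mul hq he hqe.eq) ?_
    have key : ∀ n : ℕ, f n - n • (q * e) ∈ er.Epos := by
      intro n; induction n with
      | zero => rw [hfn, pow_zero, sub_self, zero_nsmul, sub_zero]; exact epos_zero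
      | succ n ih =>
        have hsplit : f (n+1) - (n+1) • (q * e)
            = (f n - n • (q * e)) + (r ^ n - q) * e := by
          rw [hfe n, succ_nsmul, sub_mul]; abel
        rw [hsplit]
        refine epos_add ih (epos_mul (hqrn n) he ?_)
        have c : Commute (r ^ n - q) e := (cre.pow_left n).sub_left hqe
        exact c.eq
    intro n
    have h : (1:R) - n • (q * e) = (f n - n • (q * e)) + r ^ n := by
      rw [hfn]; abel
    rw [h]; exact epos_add (key n) (hrpow n)
  have heq0 : e * q = 0 := by rw [← hqe.eq]; exact hqe0
  have hqr1 : q * r = q := by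
    rw [hr_def, mul_sub, mul_one, hqe0, sub_zero]
  have hqrn' : ∀ n, q * r ^ n = q := by
    intro n; induction n with
    | zero => simp
    | succ n ih => rw [pow_succ, ← mul_assoc, ih, hqr1]
  have hqf : ∀ n, q * f n = 0 := by
    intro n
    rw [hfn, mul_sub, mul_one, hqrn' n, sub_self]
  have hp_eq : p = 1 - q := by rw [hq_def]; abel
  have hpf' : ∀ n, p * f n = f n := by
    intro n
    rw [hp_eq, sub_mul, one_mul, hqf n, sub_zero]
  -- p is a projection
  have hubsq : ∀ n, p ^ 2 - f n ∈ er.Epos := by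
    intro n
    have h : p ^ 2 - f n = p * (p - f n) := by
      rw [mul_sub, ← sq, hpf' n]
    rw [h]
    exact epos_mul hpE (hub n) ((Commute.refl p).sub_right (hpf n)).eq
  have hle1 : p ^ 2 - p ∈ er.Epos := by
    refine hsup.2.2 (p ^ 2) (G_of_epos (by rw [sq]; exact epos_mul hpE hpE rfl)) ?_
    rintro a ⟨n, rfl⟩; exact hubsq n
  have hle2 : p - p ^ 2 ∈ er.Epos := by
    have h : p - p ^ 2 = p * q := by rw [hq_def, mul_sub, mul_one, ← sq]
    rw [h]
    refine epos_mul hpE hq ?_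
    rw [hq_def, mul_sub, mul_one, sub_mul, one_mul]
  have hproj : p = p ^ 2 := by
    have h0 : p - p ^ 2 = 0 := epos_antisym hle2 (by rw [neg_sub]; exact hle1)
    exact (sub_eq_zero.mp h0)
  -- e * p = e
  have hep : e * p = e := by
    have h : e * q = e - e * p := by rw [hq_def, mul_sub, mul_one]
    rw [h] at heq0
    exact (sub_eq_zero.mp heq0).symm
  refine ⟨p, hpG, hproj, ?_, ?_⟩
  · intro x hxG
    constructor
    · -- e * x = 0 → p * x = 0
      intro hex
      have hxe : x * e = 0 := ann_symm hQA (G_of_epos he) hxG hex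
      have hrx : r * x = x := by rw [hr_def, sub_mul, one_mul, hex, sub_zero]
      have hxr : x * r = x := by rw [hr_def, mul_sub, mul_one, hxe, sub_zero]
      have hrnx : ∀ n, r ^ n * x = x := by
        intro n; induction n with
        | zero => simp
        | succ n ih => rw [pow_succ, mul_assoc, hrx, ih]
      have hxrn : ∀ n, x * r ^ n = x := by
        intro n; induction n with
        | zero => simp
        | succ n ih => rw [pow_succ, ← mul_assoc, ih, hxr]
      have hfx : ∀ n, f n * x = 0 := by
        intro n; rw [hfn, sub_mul, one_mul, hrnx n, sub_self]
      have hxf : ∀ n, x * f n = 0 := by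
        intro n; rw [hfn, mul_sub, mul_one, hxrn n, sub_self]
      have hpx : p * x = x * p := hcc.2 x
        ⟨hxG, by rintro a ⟨n, rfl⟩; rw [hxf n, hfx n]⟩
      have hx2 : x ^ 2 ∈ er.Epos := G_sq hxG
      have hx2e : x ^ 2 * e = 0 := by rw [sq, mul_assoc, hxe, mul_zero]
      have hex2 : e * x ^ 2 = 0 := by rw [sq, ← mul_assoc, hex, zero_mul]
      obtain ⟨N, hN⟩ := epos_bound hx2
      have hNle : N ≤ 2 ^ (2 * N) := by
        calc N ≤ 2 ^ N := Nat.le_of_lt (Nat.lt_two_pow_self (n := N))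
        _ ≤ 2 ^ (2 * N) := Nat.pow_le_pow_right (by norm_num) (by omega)
      have hNk : (2:R) ^ (2*N) - (N:R) ∈ er.Epos := by
        have h := epos_natCast (er := er) (2 ^ (2*N) - N)
        have hcast : ((2 ^ (2*N) - N : ℕ) : R) = (2:R) ^ (2*N) - (N:R) := by
          push_cast [Nat.cast_sub hNle]; ring
        rwa [hcast] at h
      have hbig : (2:R) ^ (2*N) - x ^ 2 ∈ er.Epos := by
        have h := epos_add hNk hN
        have h2 : ((2:R) ^ (2*N) - (N:R)) + ((N:R) - x ^ 2) = (2:R) ^ (2*N) - x ^ 2 := by abel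
        rwa [h2] at h
      obtain ⟨t, ht_def⟩ : ∃ t : R, t = hl ^ (2*N) * x ^ 2 := ⟨_, rfl⟩
      have hcp : ∀ (m : ℕ) (z : R), hl ^ m * z = z * hl ^ m := half_pow_central hh
      have ht : t ∈ er.Epos := by
        have h : hl ^ N * x ^ 2 * hl ^ N = t := by
          rw [mul_assoc, ← hcp N (x ^ 2), ← mul_assoc, ← pow_add, ht_def, two_mul]
        rw [← h]
        exact epos_conj (epos_pow (epos_of_E hmem) N) hx2
      have h2t : (2:R) ^ (2*N) * t = x ^ 2 := by
        rw [ht_def, ← mul_assoc, ← hcp (2*N) ((2:R) ^ (2*N)), mul_assoc]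
        exact half_inv hh (2*N) (x ^ 2)
      have h1t : (1:R) - t ∈ er.Epos := by
        refine epos_div hh hmem N ?_
        have h : (2:R) ^ (2*N) * (1 - t) = (2:R) ^ (2*N) - x ^ 2 := by
          rw [mul_sub, mul_one, h2t]
        rw [h]; exact hbig
      have hte : t * e = 0 := by rw [ht_def, mul_assoc, hx2e, mul_zero]
      have het : e * t = 0 := by
        rw [ht_def, ← mul_assoc, ← hcp (2*N) e, mul_assoc, hex2, mul_zero]
      have htr : t * r = t := by rw [hr_def, mul_sub, mul_one, hte, sub_zero]
      have htrn : ∀ n, t * r ^ n = t := by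
        intro n; induction n with
        | zero => simp
        | succ n ih => rw [pow_succ, ← mul_assoc, ih, htr]
      have hrt : r * t = t := by rw [hr_def, sub_mul, one_mul, het, sub_zero]
      have hrnt : ∀ n, r ^ n * t = t := by
        intro n; induction n with
        | zero => simp
        | succ n ih => rw [pow_succ, mul_assoc, hrt, ih]
      have hubt : ∀ n, ((1:R) - t) - f n ∈ er.Epos := by
        intro n
        have h : ((1:R) - t) - f n = r ^ n * (1 - t) := by
          rw [mul_sub, mul_one, hrnt n, hfn]; abel
        rw [h]
        refine epos_mul (hrpow n) h1t ?_
        rw [mul_sub, mul_one, hrnt n, sub_mul, one_mul, htrn n]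
      have hpt_ub : ((1:R) - t) - p ∈ er.Epos := by
        refine hsup.2.2 (1 - t) (G_of_epos h1t) ?_
        rintro a ⟨n, rfl⟩; exact hubt n
      have hpx2 : p * x ^ 2 = x ^ 2 * p := by
        rw [sq, ← mul_assoc, hpx, mul_assoc, hpx, mul_assoc]
      have hpt_comm : t * p = p * t := by
        rw [ht_def, mul_assoc, ← hpx2, ← mul_assoc, hcp (2*N) p, mul_assoc]
      have htp_pos : t * p ∈ er.Epos := epos_mul ht hpE hpt_comm
      have htp_neg : -(t * p) ∈ er.Epos := by
        have hmem' : ((1:R) - t - p) * p ∈ er.Epos := by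
          refine epos_mul hpt_ub hpE ?_
          rw [sub_mul, sub_mul, one_mul, mul_sub, mul_sub, mul_one, hpt_comm]
        have h : ((1:R) - t - p) * p = -(t * p) := by
          have h1 : ((1:R) - t - p) * p = p - t * p - p * p := by noncomm_ring
          have h2 : p * p = p := by rw [← sq, ← hproj]
          rw [h1, h2]; abel
        rwa [h] at hmem'
      have htp0 : t * p = 0 := epos_antisym htp_pos htp_neg
      have hx2p : x ^ 2 * p = 0 := by
        rw [← h2t, mul_assoc, htp0, mul_zero]
      have hfinal : p * x ^ 2 * p = 0 := by
        rw [hpx2, hx2p, zero_mul]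
      exact (hQA p hpG x hxG hfinal).1
    · -- p * x = 0 → e * x = 0
      intro hpx
      rw [← hep, mul_assoc, hpx, mul_zero]
  · intro y hyG hye
    have cye : Commute y e := hye
    have cyr : Commute y r := by
      rw [hr_def]; exact (Commute.one_right y).sub_right cye
    have hycomm : y ∈ er.commutant (Set.range f) := by
      refine ⟨hyG, ?_⟩
      rintro a ⟨n, rfl⟩
      rw [hfn]
      exact ((Commute.one_right y).sub_right (cyr.pow_right n)).eq
    exact (hcc.2 y hycomm).symm

end ERingAux


open ERingAux in
/-- In an AH-algebra, each `g ∈ G` has a unique carrier projection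
`g° ∈ P` with `gh = 0 ⇔ g°h = 0` for all `h ∈ G`; moreover `g° ∈ P ∩ CC(g)`. -/
theorem stmt6 {R : Type*} [Ring R] (er : ERing R) (hAH : er.IsAH)
    (g : R) (hg : g ∈ er.G) :
    ∃ p, (p ∈ er.P ∧ ∀ h ∈ er.G, (g * h = 0 ↔ p * h = 0)) ∧
      p ∈ er.CC {g} ∧
      ∀ q, q ∈ er.P → (∀ h ∈ er.G, (g * h = 0 ↔ q * h = 0)) → q = p := by
  obtain ⟨⟨hl, hmem, hh⟩, hQA, hCV⟩ := hAH
  have hcp : ∀ (m : ℕ) (z : R), hl ^ m * z = z * hl ^ m := half_pow_central hh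
  have hg2 : g ^ 2 ∈ er.Epos := G_sq hg
  obtain ⟨N, hN⟩ := epos_bound hg2
  have hNle : N ≤ 2 ^ (2 * N) := by
    calc N ≤ 2 ^ N := Nat.le_of_lt (Nat.lt_two_pow_self (n := N))
    _ ≤ 2 ^ (2 * N) := Nat.pow_le_pow_right (by norm_num) (by omega)
  obtain ⟨e, he_def⟩ : ∃ e : R, e = hl ^ (2*N) * g ^ 2 := ⟨_, rfl⟩
  have he : e ∈ er.Epos := by
    have h : hl ^ N * g ^ 2 * hl ^ N = e := by
      rw [mul_assoc, ← hcp N (g ^ 2), ← mul_assoc, ← pow_add, he_def, two_mul]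
    rw [← h]
    exact epos_conj (epos_pow (epos_of_E hmem) N) hg2
  have h2e : (2:R) ^ (2*N) * e = g ^ 2 := by
    rw [he_def, ← mul_assoc, ← hcp (2*N) ((2:R) ^ (2*N)), mul_assoc]
    exact half_inv hh (2*N) (g ^ 2)
  have he1 : (1:R) - e ∈ er.Epos := by
    refine epos_div hh hmem N ?_
    have hNk : (2:R) ^ (2*N) - (N:R) ∈ er.Epos := by
      have h := epos_natCast (er := er) (2 ^ (2*N) - N)
      have hcast : ((2 ^ (2*N) - N : ℕ) : R) = (2:R) ^ (2*N) - (N:R) := by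
        push_cast [Nat.cast_sub hNle]; ring
      rwa [hcast] at h
    have hbig : (2:R) ^ (2*N) - g ^ 2 ∈ er.Epos := by
      have h := epos_add hNk hN
      have h2 : ((2:R) ^ (2*N) - (N:R)) + ((N:R) - g ^ 2) = (2:R) ^ (2*N) - g ^ 2 := by abel
      rwa [h2] at h
    have h : (2:R) ^ (2*N) * (1 - e) = (2:R) ^ (2*N) - g ^ 2 := by
      rw [mul_sub, mul_one, h2e]
    rw [h]; exact hbig
  obtain ⟨p, hpG, hproj, hiff, hcomm⟩ := carrier_effect hQA hCV hmem hh he he1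
  -- link annihilators of g and e
  have hgx_iff : ∀ x ∈ er.G, (g * x = 0 ↔ e * x = 0) := by
    intro x hx
    constructor
    · intro h
      have hg2x : g ^ 2 * x = 0 := by rw [sq, mul_assoc, h, mul_zero]
      rw [he_def, mul_assoc, hg2x, mul_zero]
    · intro h
      have hg2x : g ^ 2 * x = 0 := by rw [← h2e, mul_assoc, h, mul_zero]
      have h0 : x * g ^ 2 * x = 0 := by rw [mul_assoc, hg2x, mul_zero]
      exact (hQA x hx g hg h0).2
  have hgp : ∀ x ∈ er.G, (g * x = 0 ↔ p * x = 0) :=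
    fun x hx => (hgx_iff x hx).trans (hiff x hx)
  refine ⟨p, ⟨⟨hpG, hproj⟩, hgp⟩, ⟨hpG, ?_⟩, ?_⟩
  · -- CC {g}
    rintro a ⟨haG, hag⟩
    have hag' : a * g = g * a := hag g rfl
    have cag : Commute a g := hag'
    have hae : a * e = e * a := by
      rw [he_def, ← mul_assoc, ← hcp (2*N) a, mul_assoc, (cag.pow_right 2).eq, ← mul_assoc]
    exact (hcomm a haG hae).symm
  · -- uniqueness
    intro q hqP hqiff
    have h1p : (1:R) - p ∈ er.G := G_sub G_one hpG
    have h1q : (1:R) - q ∈ er.G := G_sub G_one hqP.1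
    have hp1p : p * (1 - p) = 0 := by
      rw [mul_sub, mul_one, ← sq, ← hproj, sub_self]
    have hq1p : q * (1 - p) = 0 := (hqiff _ h1p).1 ((hgp _ h1p).2 hp1p)
    have hq1q : q * (1 - q) = 0 := by
      rw [mul_sub, mul_one, ← sq, ← hqP.2, sub_self]
    have hp1q : p * (1 - q) = 0 := (hgp _ h1q).1 ((hqiff _ h1q).2 hq1q)
    have h1qp : (1 - q) * p = 0 := ann_symm hQA hpG h1q hp1q
    have hqp : q * p = q := by
      have h : q * (1 - p) = q - q * p := by rw [mul_sub, mul_one]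
      rw [h] at hq1p
      exact (sub_eq_zero.mp hq1p).symm
    have hpq : q * p = p := by
      have h : (1 - q) * p = p - q * p := by rw [sub_mul, one_mul]
      rw [h] at h1qp
      exact (sub_eq_zero.mp h1qp).symm
    exact hqp.symm.trans hpq
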